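/- Suppose every two-element subsequence q ∘ q' of R_{A,B} is a maximal increasing subsequence of R_{A,B}[f(q):f(q')] exactly when ⌈i_q⌉ ≤ i_{q'}, ⌈j_q⌉ ≤ j_{q'}, and (i_{q'} − i_q) + (j_{q'} − j_q) = 1. Then a subsequence Q of R_{A,B} is an [r(i⊢,j⊢):r(i⊣,j⊣)]-banded maximal increasing subsequence of R_{A,B}[f(i⊢,j⊢):f(i⊣,j⊣)] if and only if Q = P̂ for some alignment P of A[i⊢:i⊣] and B[j⊢:j⊣]. -/

import Mathlib

/-- One step of a warping path: advance by (1,1), (1,0), or (0,1). -/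
def IsStep (p q : ℕ × ℕ) : Prop :=
  q = (p.1 + 1, p.2 + 1) ∨ q = (p.1 + 1, p.2) ∨ q = (p.1, p.2 + 1)

/-- `P` is an alignment of `A[il:ir]` and `B[jl:jr]`: a nonempty staircase path of
index pairs from `(il, jl)` to `(ir, jr)`. -/
def IsAlignment (il ir jl jr : ℕ) (P : List (ℕ × ℕ)) : Prop :=
  P.head? = some (il, jl) ∧ P.getLast? = some (ir, jr) ∧ P.Chain' IsStep

/-- The discrepancy of an alignment w.r.t. dissimilarity `d`. -/
def disc (d : ℕ → ℕ → ℕ) (P : List (ℕ × ℕ)) : ℕ :=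
  (P.map fun p => d p.1 p.2).sum

/-- The DTW distance: minimum discrepancy over all alignments. -/
noncomputable def dtw (d : ℕ → ℕ → ℕ) (il ir jl jr : ℕ) : ℕ :=
  sInf {x | ∃ P, IsAlignment il ir jl jr P ∧ disc d P = x}

/-- The number of diagonal steps of an alignment. -/
def diagCount (P : List (ℕ × ℕ)) : ℕ :=
  ((P.zip P.tail).filter fun pq => decide (pq.2 = (pq.1.1 + 1, pq.1.2 + 1))).length


/-- Formal tokens: `r i j` (weight `c - d i j`) and `rt i j` (the token `r̃(i,j)`, weight `c`). -/
inductive Tok where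
  | r  (i j : ℕ) : Tok
  | rt (i j : ℕ) : Tok
deriving DecidableEq

/-- The domain of tokens: `r(i,j)` for `1 ≤ i ≤ m`, `1 ≤ j ≤ n`,
and `r̃(i,j)` for `2 ≤ i ≤ m`, `2 ≤ j ≤ n`. -/
def TokDom (m n : ℕ) : Tok → Prop
  | .r i j  => 1 ≤ i ∧ i ≤ m ∧ 1 ≤ j ∧ j ≤ n
  | .rt i j => 2 ≤ i ∧ i ≤ m ∧ 2 ≤ j ∧ j ≤ n

/-- The position `f(q)` of a token in the sequence `R_{A,B}`. -/
def tpos (n : ℕ) : Tok → ℕ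
  | .r i j  => (i - 1) * (2 * n - 1) + j
  | .rt i j => (i - 1) * (2 * n - 1) - j + 2

/-- The integer value of a token in the sequence `R_{A,B}`. -/
def tval (m : ℕ) : Tok → ℕ
  | .r i j  => (j - 1) * (2 * m - 1) + i
  | .rt i j => (j - 1) * (2 * m - 1) - i + 2

/-- The (half-integer) row coordinate `i_q` of a token. -/
def iq : Tok → ℚ
  | .r i _  => i
  | .rt i _ => (i : ℚ) - 1/2

/-- The (half-integer) column coordinate `j_q` of a token. -/
def jq : Tok → ℚ
  | .r _ j  => j
  | .rt _ j => (j : ℚ) - 1/2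

/-- The weight of a token: `c - d i j` for `r(i,j)` and `c` for `r̃(i,j)`. -/
def tw (c : ℕ) (d : ℕ → ℕ → ℕ) : Tok → ℕ
  | .r i j => c - d i j
  | .rt _ _ => c

/-- `Q` is an increasing subsequence of the segment of `R_{A,B}` occupying
positions `pl` through `pr`: its tokens are in the domain, their positions lie in
`[pl, pr]` and strictly increase, and their values strictly increase. -/
def IncSeg (m n pl pr : ℕ) (Q : List Tok) : Prop :=
  (∀ t ∈ Q, TokDom m n t ∧ pl ≤ tpos n t ∧ tpos n t ≤ pr) ∧
    Q.Chain' fun t t' => tpos n t < tpos n t' ∧ tval m t < tval m t'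

/-- `Q` is `[a:b]`-banded: every value lies in `[a, b]`. -/
def Banded (m a b : ℕ) (Q : List Tok) : Prop :=
  ∀ t ∈ Q, a ≤ tval m t ∧ tval m t ≤ b

/-- `Q` is a maximal increasing subsequence of the segment `[pl, pr]` of `R_{A,B}`:
it is the only increasing subsequence of the segment having it as a subsequence. -/
def MaxIncSeg (m n pl pr : ℕ) (Q : List Tok) : Prop :=
  IncSeg m n pl pr Q ∧ ∀ Q', IncSeg m n pl pr Q' → Q.Sublist Q' → Q' = Q

/-- `Q` is a maximal `[a:b]`-banded increasing subsequence of the segment `[pl, pr]`. -/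
def MaxBandIncSeg (m n pl pr a b : ℕ) (Q : List Tok) : Prop :=
  IncSeg m n pl pr Q ∧ Banded m a b Q ∧
    ∀ Q', IncSeg m n pl pr Q' → Banded m a b Q' → Q.Sublist Q' → Q' = Q


/-- Helper for `hat`: processes the tail of an alignment, knowing the previous pair. -/
def hatAux : ℕ × ℕ → List (ℕ × ℕ) → List Tok
  | _, [] => []
  | p, q :: rest =>
      (if q = (p.1 + 1, p.2 + 1) then [Tok.rt q.1 q.2, Tok.r q.1 q.2]
       else [Tok.r q.1 q.2]) ++ hatAux q rest

/-- `hat P` is the sequence `P̂`: each diagonal step `(i,j)` of the alignment `P` is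
replaced by `r̃(i,j) ∘ r(i,j)`, and every other element `(i,j)` by `r(i,j)`. -/
def hat : List (ℕ × ℕ) → List Tok
  | [] => []
  | p :: rest => Tok.r p.1 p.2 :: hatAux p rest


/-- The geometric step relation between tokens (RHS of hypothesis `H`). -/
def Step2 (q q' : Tok) : Prop :=
  (⌈iq q⌉ : ℚ) ≤ iq q' ∧ (⌈jq q⌉ : ℚ) ≤ jq q' ∧
    (iq q' - iq q) + (jq q' - jq q) = 1

lemma ceil_half (i : ℕ) : ⌈(i : ℚ) - 1/2⌉ = (i : ℤ) := by
  rw [Int.ceil_eq_iff]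
  constructor <;> push_cast <;> linarith

lemma step2_r_r (i j i' j' : ℕ) :
    Step2 (.r i j) (.r i' j') ↔ (i' = i + 1 ∧ j' = j) ∨ (i' = i ∧ j' = j + 1) := by
  simp only [Step2, iq, jq]
  rw [Int.ceil_natCast, Int.ceil_natCast]
  constructor
  · rintro ⟨h1, h2, h3⟩
    have h1' : i ≤ i' := by exact_mod_cast h1
    have h2' : j ≤ j' := by exact_mod_cast h2
    have h3' : (i' : ℚ) + j' = i + j + 1 := by linarith
    have h3'' : i' + j' = i + j + 1 := by exact_mod_cast h3'
    omega
  · rintro (⟨rfl, rfl⟩ | ⟨rfl, rfl⟩) <;> push_cast <;> norm_num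

lemma step2_r_rt (i j i' j' : ℕ) :
    Step2 (.r i j) (.rt i' j') ↔ i' = i + 1 ∧ j' = j + 1 := by
  simp only [Step2, iq, jq]
  rw [Int.ceil_natCast, Int.ceil_natCast]
  constructor
  · rintro ⟨h1, h2, h3⟩
    have h1' : (i : ℚ) < i' := by push_cast at h1 ⊢; linarith
    have h2' : (j : ℚ) < j' := by push_cast at h2 ⊢; linarith
    have h1'' : i < i' := by exact_mod_cast h1'
    have h2'' : j < j' := by exact_mod_cast h2'
    have h3' : (i' : ℚ) + j' = i + j + 2 := by linarith
    have h3'' : i' + j' = i + j + 2 := by exact_mod_cast h3'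
    omega
  · rintro ⟨rfl, rfl⟩
    refine ⟨by push_cast; linarith, by push_cast; linarith, by push_cast; ring⟩

lemma step2_rt_r (i j i' j' : ℕ) :
    Step2 (.rt i j) (.r i' j') ↔ i' = i ∧ j' = j := by
  simp only [Step2, iq, jq]
  rw [ceil_half, ceil_half]
  constructor
  · rintro ⟨h1, h2, h3⟩
    have h1' : i ≤ i' := by exact_mod_cast h1
    have h2' : j ≤ j' := by exact_mod_cast h2
    have h3' : (i' : ℚ) + j' = i + j := by push_cast at h3 ⊢; linarith
    have h3'' : i' + j' = i + j := by exact_mod_cast h3'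
    omega
  · rintro ⟨rfl, rfl⟩
    refine ⟨by push_cast; linarith, by push_cast; linarith, by push_cast; ring⟩

lemma step2_rt_rt (i j i' j' : ℕ) : ¬ Step2 (.rt i j) (.rt i' j') := by
  simp only [Step2, iq, jq]
  rw [ceil_half, ceil_half]
  rintro ⟨h1, h2, h3⟩
  have h1' : (i : ℚ) < i' := by push_cast at h1 ⊢; linarith
  have h2' : (j : ℚ) < j' := by push_cast at h2 ⊢; linarith
  have h1'' : i < i' := by exact_mod_cast h1'
  have h2'' : j < j' := by exact_mod_cast h2'
  have h1q : (i : ℚ) + 1 ≤ i' := by exact_mod_cast h1''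
  have h2q : (j : ℚ) + 1 ≤ j' := by exact_mod_cast h2''
  linarith
/-- Uniqueness of the "row-major" encoding. -/
lemma enc_inj {X a b a' b' : ℕ} (hX : 1 ≤ X)
    (ha : 1 ≤ a) (ha' : 1 ≤ a')
    (hb : 1 ≤ b) (hbX : b ≤ X) (hb' : 1 ≤ b') (hb'X : b' ≤ X)
    (h : (a - 1) * (2 * X - 1) + b = (a' - 1) * (2 * X - 1) + b') :
    a = a' ∧ b = b' := by
  obtain ⟨c, rfl⟩ : ∃ c, a = c + 1 := ⟨a - 1, by omega⟩
  obtain ⟨c', rfl⟩ : ∃ c', a' = c' + 1 := ⟨a' - 1, by omega⟩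
  simp only [Nat.add_sub_cancel] at h
  have hc : c = c' := by
    rcases lt_trichotomy c c' with hlt | heq | hlt
    · exfalso
      have : (c + 1) * (2 * X - 1) ≤ c' * (2 * X - 1) := Nat.mul_le_mul_right _ (by omega)
      have h2 : c * (2 * X - 1) + (2 * X - 1) ≤ c' * (2 * X - 1) := by
        rw [← Nat.succ_mul]; exact this
      omega
    · exact heq
    · exfalso
      have : (c' + 1) * (2 * X - 1) ≤ c * (2 * X - 1) := Nat.mul_le_mul_right _ (by omega)
      have h2 : c' * (2 * X - 1) + (2 * X - 1) ≤ c * (2 * X - 1) := by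
        rw [← Nat.succ_mul]; exact this
      omega
  subst hc
  omega

/-- The `rt`-encoding never coincides with the `r`-encoding. -/
lemma enc_ne {X a b a' b' : ℕ}
    (ha : 1 ≤ a) (hb : 1 ≤ b) (hbX : b ≤ X)
    (ha' : 2 ≤ a') (hb' : 2 ≤ b') (hb'X : b' ≤ X) :
    (a' - 1) * (2 * X - 1) - b' + 2 ≠ (a - 1) * (2 * X - 1) + b := by
  intro h
  obtain ⟨c, rfl⟩ : ∃ c, a = c + 1 := ⟨a - 1, by omega⟩
  obtain ⟨c', rfl⟩ : ∃ c', a' = c' + 2 := ⟨a' - 2, by omega⟩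
  simp only [Nat.add_sub_cancel] at h
  have hX1 : 1 ≤ X := by omega
  have hc'b : b' ≤ (c' + 1) * (2 * X - 1) := by
    calc b' ≤ 2 * X - 1 := by omega
    _ ≤ (c' + 1) * (2 * X - 1) := Nat.le_mul_of_pos_left _ (by omega)
  rcases Nat.lt_or_ge c' c with hlt | hge
  · -- a' ≤ a : LHS ≤ (c'+1)(2X-1) ≤ c(2X-1) < RHS
    have h1 : (c' + 1) * (2 * X - 1) ≤ c * (2 * X - 1) := Nat.mul_le_mul_right _ (by omega)
    have h3 : (c' + 2 - 1) = c' + 1 := by omega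
    rw [h3] at h
    omega
  · -- a' ≥ a + 1 : LHS ≥ (c+1)(2X-1) - b' + 2 > c(2X-1) + b = RHS
    have h1 : (c + 1) * (2 * X - 1) ≤ (c' + 1) * (2 * X - 1) := Nat.mul_le_mul_right _ (by omega)
    have h2 : (c + 1) * (2 * X - 1) = c * (2 * X - 1) + (2 * X - 1) := Nat.succ_mul c (2 * X - 1)
    have h3 : (c' + 2 - 1) = c' + 1 := by omega
    rw [h3] at h
    omega

lemma enc_mono {X a b a' b' : ℕ} (ha : a ≤ a') (hb : b ≤ b') :
    (a - 1) * (2 * X - 1) + b ≤ (a' - 1) * (2 * X - 1) + b' :=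
  Nat.add_le_add (Nat.mul_le_mul_right _ (by omega)) hb

/-- A token in the domain whose position equals that of `r i j` is `r i j`. -/
lemma tok_pos_eq {m n i j : ℕ} (hn : 1 ≤ n) {t : Tok} (ht : TokDom m n t)
    (hi : 1 ≤ i) (hj : 1 ≤ j) (hjn : j ≤ n)
    (h : tpos n t = tpos n (.r i j)) : t = .r i j := by
  cases t with
  | r a b =>
    obtain ⟨h1, h2, h3, h4⟩ := ht
    simp only [tpos] at h
    obtain ⟨rfl, rfl⟩ := enc_inj hn h1 hi h3 h4 hj hjn h
    rfl
  | rt a b =>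
    obtain ⟨h1, h2, h3, h4⟩ := ht
    simp only [tpos] at h
    exact absurd h (enc_ne hi hj hjn h1 h3 h4)

/-- A token in the domain whose value equals that of `r i j` is `r i j`. -/
lemma tok_val_eq {m n i j : ℕ} (hm : 1 ≤ m) {t : Tok} (ht : TokDom m n t)
    (hi : 1 ≤ i) (him : i ≤ m) (hj : 1 ≤ j)
    (h : tval m t = tval m (.r i j)) : t = .r i j := by
  cases t with
  | r a b =>
    obtain ⟨h1, h2, h3, h4⟩ := ht
    simp only [tval] at h
    obtain ⟨rfl, rfl⟩ := enc_inj hm h3 hj h1 h2 hi him h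
    rfl
  | rt a b =>
    obtain ⟨h1, h2, h3, h4⟩ := ht
    simp only [tval] at h
    exact absurd h (enc_ne hj hi him h3 h1 h2)
section ListHelpers
variable {α : Type*}

/-- The head of a chain is related (transitively) to every later element. -/
lemma chain'_head_rel {S R : α → α → Prop} (hS : ∀ a b, S a b → R a b)
    (hR : Transitive R) :
    ∀ {l : List α}, l.Chain' S → ∀ {a}, l.head? = some a → ∀ x ∈ l, a = x ∨ R a x := by
  intro l
  induction l with
  | nil => simp
  | cons p rest ih =>
    intro h a ha x hx
    simp only [List.head?_cons, Option.some.injEq] at ha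
    subst ha
    rcases List.mem_cons.mp hx with rfl | hx
    · exact Or.inl rfl
    · cases rest with
      | nil => simp at hx
      | cons q rest' =>
        obtain ⟨hpq, h2⟩ := List.isChain_cons_cons.mp h
        rcases ih h2 rfl x hx with rfl | h3
        · exact Or.inr (hS _ _ hpq)
        · exact Or.inr (hR (hS _ _ hpq) h3)

lemma chain'_rel_last {S R : α → α → Prop} (hS : ∀ a b, S a b → R a b)
    (hR : Transitive R)
    {l : List α} (h : l.Chain' S) {a : α} (ha : l.getLast? = some a) :
    ∀ x ∈ l, x = a ∨ R x a := by
  intro x hx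
  have h' : l.reverse.Chain' (flip S) := List.isChain_reverse.mpr h
  have ha' : l.reverse.head? = some a := by rw [List.head?_reverse]; exact ha
  have := chain'_head_rel (S := flip S) (R := flip R) (fun a b hab => hS b a hab)
    (fun a b c h1 h2 => hR h2 h1) h' ha' x (List.mem_reverse.mpr hx)
  tauto

lemma chain'_head_lt {S : α → α → Prop} {f : α → ℕ} (hS : ∀ a b, S a b → f a < f b)
    {l : List α} (h : l.Chain' S) {a : α} (ha : l.head? = some a) :
    ∀ x ∈ l, a = x ∨ f a < f x :=
  chain'_head_rel (R := fun a b => f a < f b) hS (fun _ _ _ => lt_trans) h ha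

lemma chain'_lt_last {S : α → α → Prop} {f : α → ℕ} (hS : ∀ a b, S a b → f a < f b)
    {l : List α} (h : l.Chain' S) {a : α} (ha : l.getLast? = some a) :
    ∀ x ∈ l, x = a ∨ f x < f a :=
  chain'_rel_last (R := fun a b => f a < f b) hS (fun _ _ _ => lt_trans) h ha

lemma chain'_head_le {S : α → α → Prop} {f : α → ℕ} (hS : ∀ a b, S a b → f a ≤ f b)
    {l : List α} (h : l.Chain' S) {a : α} (ha : l.head? = some a) :
    ∀ x ∈ l, f a ≤ f x := by
  intro x hx
  rcases chain'_head_rel (R := fun a b => f a ≤ f b) hS (fun _ _ _ => le_trans) h ha x hx with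
    rfl | h'
  · exact le_refl _
  · exact h'

lemma chain'_le_last {S : α → α → Prop} {f : α → ℕ} (hS : ∀ a b, S a b → f a ≤ f b)
    {l : List α} (h : l.Chain' S) {a : α} (ha : l.getLast? = some a) :
    ∀ x ∈ l, f x ≤ f a := by
  intro x hx
  rcases chain'_rel_last (R := fun a b => f a ≤ f b) hS (fun _ _ _ => le_trans) h ha x hx with
    rfl | h'
  · exact le_refl _
  · exact h'

lemma chain'_and_mem {S : α → α → Prop} {p : α → Prop} :
    ∀ {l : List α}, l.Chain' S → (∀ x ∈ l, p x) →
      l.Chain' (fun a b => S a b ∧ p a ∧ p b) := by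
  intro l
  induction l with
  | nil => simp [List.Chain']
  | cons a rest ih =>
    intro h hp
    cases rest with
    | nil => simp [List.Chain']
    | cons b rest' =>
      obtain ⟨hab, h2⟩ := List.isChain_cons_cons.mp h
      refine List.isChain_cons_cons.mpr ⟨⟨hab, hp a (by simp), hp b (by simp)⟩, ?_⟩
      exact ih h2 (fun x hx => hp x (List.mem_cons_of_mem _ hx))

/-- A proper supersequence contains an inserted element. -/
lemma sublist_ne_exists {Q Q' : List α} (h : Q.Sublist Q') (hne : Q' ≠ Q) :
    ∃ l₁ x l₂, Q' = l₁ ++ x :: l₂ ∧ Q.Sublist (l₁ ++ l₂) := by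
  induction h with
  | slnil => exact absurd rfl hne
  | @cons l₁ l₂ x h ih => exact ⟨[], x, l₂, rfl, h⟩
  | @cons_cons l₁ l₂ x h ih =>
    by_cases heq : l₂ = l₁
    · subst heq; exact absurd rfl hne
    · obtain ⟨m₁, y, m₂, he, hs⟩ := ih heq
      exact ⟨x :: m₁, y, m₂, by rw [he]; rfl, by simpa using hs.cons_cons x⟩
end ListHelpers
/-- The canonical token chain predicate. -/
def ChainQ (m n il ir jl jr : ℕ) (Q : List Tok) : Prop :=
  Q.head? = some (.r il jl) ∧ Q.getLast? = some (.r ir jr) ∧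
    Q.Chain' Step2 ∧ ∀ t ∈ Q, TokDom m n t

lemma isStep_mono {p q : ℕ × ℕ} (h : IsStep p q) : p.1 ≤ q.1 ∧ p.2 ≤ q.2 := by
  rcases h with h | h | h <;> subst h <;> constructor <;> simp

/-- Master structural lemma about `hat` on chains. -/
lemma hat_spec : ∀ (P : List (ℕ × ℕ)) (p : ℕ × ℕ), List.Chain' IsStep (p :: P) →
    (hat (p :: P)).head? = some (.r p.1 p.2) ∧
    (∀ q, (p :: P).getLast? = some q → (hat (p :: P)).getLast? = some (.r q.1 q.2)) ∧
    List.Chain' Step2 (hat (p :: P)) ∧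
    (∀ t ∈ hat (p :: P), ∃ q ∈ p :: P,
      t = .r q.1 q.2 ∨ (t = .rt q.1 q.2 ∧ ∃ q' ∈ p :: P, q.1 = q'.1 + 1 ∧ q.2 = q'.2 + 1)) := by
  intro P
  induction P with
  | nil =>
    intro p _
    refine ⟨rfl, ?_, by simp [hat, hatAux, List.Chain'], ?_⟩
    · intro q hq
      simp only [List.getLast?_singleton, Option.some.injEq] at hq
      subst hq; rfl
    · intro t ht
      simp only [hat, hatAux, List.mem_singleton] at ht
      exact ⟨p, by simp, Or.inl ht⟩
  | cons q rest ih =>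
    intro p h
    obtain ⟨hpq, h2⟩ := List.isChain_cons_cons.mp h
    obtain ⟨ihhead, ihlast, ihchain, ihmem⟩ := ih q h2
    have hhat : hat (q :: rest) = Tok.r q.1 q.2 :: hatAux q rest := rfl
    by_cases hd : q = (p.1 + 1, p.2 + 1)
    · -- diagonal step
      have he : hat (p :: q :: rest) =
          .r p.1 p.2 :: .rt q.1 q.2 :: .r q.1 q.2 :: hatAux q rest := by
        simp [hat, hatAux, hd]
      rw [he]
      refine ⟨rfl, ?_, ?_, ?_⟩
      · intro q' hq'
        rw [List.getLast?_cons_cons] at hq'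
        rw [List.getLast?_cons_cons, List.getLast?_cons_cons]
        rw [← hhat]
        exact ihlast q' hq'
      · refine List.isChain_cons_cons.mpr ⟨?_, List.isChain_cons_cons.mpr ⟨?_, ?_⟩⟩
        · rw [step2_r_rt, hd]
          exact ⟨rfl, rfl⟩
        · rw [step2_rt_r]; exact ⟨rfl, rfl⟩
        · rw [← hhat]; exact ihchain
      · intro t ht
        rcases List.mem_cons.mp ht with rfl | ht
        · exact ⟨p, List.mem_cons_self, Or.inl rfl⟩
        rcases List.mem_cons.mp ht with rfl | ht
        · refine ⟨q, List.mem_cons_of_mem _ (List.mem_cons_self),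
            Or.inr ⟨rfl, p, List.mem_cons_self, ?_, ?_⟩⟩ <;> rw [hd]
        · rw [← hhat] at ht
          obtain ⟨q'', hq'', hcase⟩ := ihmem t ht
          refine ⟨q'', List.mem_cons_of_mem _ hq'', ?_⟩
          rcases hcase with h1 | ⟨h1, q', hq', h3⟩
          · exact Or.inl h1
          · exact Or.inr ⟨h1, q', List.mem_cons_of_mem _ hq', h3⟩
    · -- horizontal/vertical step
      have he : hat (p :: q :: rest) = .r p.1 p.2 :: .r q.1 q.2 :: hatAux q rest := by
        simp [hat, hatAux, hd]
      rw [he]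
      refine ⟨rfl, ?_, ?_, ?_⟩
      · intro q' hq'
        rw [List.getLast?_cons_cons] at hq'
        rw [List.getLast?_cons_cons, ← hhat]
        exact ihlast q' hq'
      · refine List.isChain_cons_cons.mpr ⟨?_, ?_⟩
        · rw [step2_r_r]
          rcases hpq with h1 | h1 | h1
          · exact absurd h1 hd
          · rw [h1]; left; exact ⟨rfl, rfl⟩
          · rw [h1]; right; exact ⟨rfl, rfl⟩
        · rw [← hhat]; exact ihchain
      · intro t ht
        rcases List.mem_cons.mp ht with rfl | ht
        · exact ⟨p, List.mem_cons_self, Or.inl rfl⟩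
        · rw [← hhat] at ht
          obtain ⟨q'', hq'', hcase⟩ := ihmem t ht
          refine ⟨q'', List.mem_cons_of_mem _ hq'', ?_⟩
          rcases hcase with h1 | ⟨h1, q', hq', h3⟩
          · exact Or.inl h1
          · exact Or.inr ⟨h1, q', List.mem_cons_of_mem _ hq', h3⟩

/-- Every element of an alignment lies in the bounding box. -/
lemma alignment_bounds {il ir jl jr : ℕ} {P : List (ℕ × ℕ)}
    (hP : IsAlignment il ir jl jr P) :
    ∀ p ∈ P, il ≤ p.1 ∧ p.1 ≤ ir ∧ jl ≤ p.2 ∧ p.2 ≤ jr := by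
  obtain ⟨hh, hl, hc⟩ := hP
  intro p hp
  have h1 := chain'_head_le (f := Prod.fst) (fun a b hab => (isStep_mono hab).1) hc hh p hp
  have h2 := chain'_head_le (f := Prod.snd) (fun a b hab => (isStep_mono hab).2) hc hh p hp
  have h3 := chain'_le_last (f := Prod.fst) (fun a b hab => (isStep_mono hab).1) hc hl p hp
  have h4 := chain'_le_last (f := Prod.snd) (fun a b hab => (isStep_mono hab).2) hc hl p hp
  exact ⟨h1, h3, h2, h4⟩

/-- An alignment gives a canonical token chain. -/
lemma alignment_chainQ {m n il ir jl jr : ℕ}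
    (hil : 1 ≤ il) (him : ir ≤ m) (hjl : 1 ≤ jl) (hjn : jr ≤ n)
    {P : List (ℕ × ℕ)} (hP : IsAlignment il ir jl jr P) :
    ChainQ m n il ir jl jr (hat P) := by
  obtain ⟨hh, hl, hc⟩ := hP
  have hbounds := alignment_bounds ⟨hh, hl, hc⟩
  cases P with
  | nil => simp at hh
  | cons p rest =>
    simp only [List.head?_cons, Option.some.injEq] at hh
    obtain ⟨hhead, hlast, hchain, hmem⟩ := hat_spec rest p hc
    refine ⟨?_, ?_, hchain, ?_⟩
    · rw [hhead, hh]
    · exact hlast (ir, jr) hl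
    · intro t ht
      obtain ⟨q, hq, hcase⟩ := hmem t ht
      obtain ⟨b1, b2, b3, b4⟩ := hbounds q hq
      rcases hcase with rfl | ⟨rfl, q', hq', e1, e2⟩
      · exact ⟨by omega, by omega, by omega, by omega⟩
      · obtain ⟨c1, c2, c3, c4⟩ := hbounds q' hq'
        exact ⟨by omega, by omega, by omega, by omega⟩
/-- Extract the underlying alignment from a token sequence. -/
def unhat : List Tok → List (ℕ × ℕ)
  | [] => []
  | .r i j :: rest => (i, j) :: unhat rest
  | .rt _ _ :: rest => unhat rest

lemma unhat_spec : ∀ (N : ℕ) (Q : List Tok), Q.length ≤ N → Q.Chain' Step2 →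
    ∀ i j, Q.head? = some (.r i j) →
    (∀ el, Q.getLast? = some el → ∃ a b, el = Tok.r a b) →
    hat (unhat Q) = Q ∧ (unhat Q).head? = some (i, j) ∧
      (∀ i' j', Q.getLast? = some (.r i' j') → (unhat Q).getLast? = some (i', j')) ∧
      (unhat Q).Chain' IsStep := by
  intro N
  induction N with
  | zero =>
    intro Q hlen _ i j hh _
    rw [Nat.le_zero, List.length_eq_zero_iff] at hlen
    subst hlen
    simp at hh
  | succ N ihN =>
    intro Q hlen hchain i j hh hlastr
    cases Q with
    | nil => simp at hh
    | cons t0 rest =>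
    simp only [List.head?_cons, Option.some.injEq] at hh
    subst hh
    cases rest with
    | nil =>
      refine ⟨by simp [unhat, hat, hatAux], by simp [unhat], ?_, by simp [unhat, List.Chain']⟩
      intro i' j' hl
      simp only [List.getLast?_singleton, Option.some.injEq] at hl
      simp only [unhat, List.getLast?_singleton, Option.some.injEq]
      cases hl; rfl
    | cons t rest' =>
      obtain ⟨hstep, hchain2⟩ := List.isChain_cons_cons.mp hchain
      cases t with
      | r a b =>
        rw [step2_r_r] at hstep
        have hlast2 : ∀ el, (Tok.r a b :: rest').getLast? = some el → ∃ a' b', el = Tok.r a' b' := by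
          intro el hel
          exact hlastr el (by rw [List.getLast?_cons_cons]; exact hel)
        obtain ⟨ih1, ih2, ih3, ih4⟩ := ihN (Tok.r a b :: rest') (by simp only [List.length_cons] at hlen ⊢; omega)
          hchain2 a b rfl hlast2
        have hu : unhat (Tok.r i j :: Tok.r a b :: rest') = (i, j) :: unhat (Tok.r a b :: rest') := rfl
        have hu2 : unhat (Tok.r a b :: rest') = (a, b) :: unhat rest' := rfl
        have hnd : (a, b) ≠ (i + 1, j + 1) := by
          rcases hstep with ⟨rfl, rfl⟩ | ⟨rfl, rfl⟩ <;> simp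
        constructor
        · rw [hu, hu2]
          show Tok.r i j :: hatAux (i, j) ((a, b) :: unhat rest') = _
          simp only [hatAux, if_neg hnd, List.singleton_append]
          have : Tok.r a b :: hatAux (a, b) (unhat rest') = hat (unhat (Tok.r a b :: rest')) := by
            rw [hu2]; rfl
          rw [this, ih1]
        refine ⟨by rw [hu]; rfl, ?_, ?_⟩
        · intro i' j' hl
          rw [List.getLast?_cons_cons] at hl
          rw [hu, hu2, List.getLast?_cons_cons, ← hu2]
          exact ih3 i' j' hl
        · rw [hu, hu2]
          refine List.isChain_cons_cons.mpr ⟨?_, ?_⟩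
          · rcases hstep with ⟨rfl, rfl⟩ | ⟨rfl, rfl⟩
            · right; left; rfl
            · right; right; rfl
          · rw [← hu2]; exact ih4
      | rt a b =>
        rw [step2_r_rt] at hstep
        obtain ⟨rfl, rfl⟩ := hstep
        cases rest' with
        | nil =>
          exfalso
          obtain ⟨a', b', hab⟩ := hlastr (Tok.rt (i+1) (j+1)) (by rw [List.getLast?_cons_cons]; rfl)
          exact Tok.noConfusion hab
        | cons u rest'' =>
          obtain ⟨hstep2, hchain3⟩ := List.isChain_cons_cons.mp hchain2
          have hu_eq : u = Tok.r (i+1) (j+1) := by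
            cases u with
            | r a' b' =>
              rw [step2_rt_r] at hstep2
              obtain ⟨rfl, rfl⟩ := hstep2; rfl
            | rt a' b' => exact absurd hstep2 (step2_rt_rt _ _ _ _)
          subst hu_eq
          obtain ⟨hchain2', hchain4⟩ := List.isChain_cons_cons.mp hchain2
          have hlast2 : ∀ el, (Tok.r (i+1) (j+1) :: rest'').getLast? = some el →
              ∃ a' b', el = Tok.r a' b' := by
            intro el hel
            exact hlastr el (by rw [List.getLast?_cons_cons, List.getLast?_cons_cons]; exact hel)
          obtain ⟨ih1, ih2, ih3, ih4⟩ := ihN (Tok.r (i+1) (j+1) :: rest'')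
            (by simp only [List.length_cons] at hlen ⊢; omega) hchain3 (i+1) (j+1) rfl hlast2
          have hu : unhat (Tok.r i j :: Tok.rt (i+1) (j+1) :: Tok.r (i+1) (j+1) :: rest'')
              = (i, j) :: (i+1, j+1) :: unhat rest'' := rfl
          have hu2 : unhat (Tok.r (i+1) (j+1) :: rest'') = (i+1, j+1) :: unhat rest'' := rfl
          constructor
          · rw [hu]
            show Tok.r i j :: hatAux (i, j) ((i+1, j+1) :: unhat rest'') = _
            simp only [hatAux]
            simp only [if_true]
            have : Tok.r (i+1) (j+1) :: hatAux (i+1, j+1) (unhat rest'')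
                = hat (unhat (Tok.r (i+1) (j+1) :: rest'')) := by rw [hu2]; rfl
            simp only [List.cons_append, List.nil_append]
            rw [this, ih1]
          refine ⟨by rw [hu]; rfl, ?_, ?_⟩
          · intro i' j' hl
            rw [List.getLast?_cons_cons, List.getLast?_cons_cons] at hl
            rw [hu, List.getLast?_cons_cons, ← hu2]
            exact ih3 i' j' hl
          · rw [hu]
            refine List.isChain_cons_cons.mpr ⟨Or.inl rfl, ?_⟩
            rw [← hu2]; exact ih4
section Main
variable {m n il ir jl jr : ℕ}

lemma maxinc_pair_lt {t t' : Tok} (h : MaxIncSeg m n (tpos n t) (tpos n t') [t, t']) :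
    tpos n t < tpos n t' ∧ tval m t < tval m t' := by
  have h2 := h.1.2
  rw [List.Chain', List.isChain_cons_cons] at h2
  exact h2.1

/-- A canonical chain is a maximal banded increasing subsequence. -/
lemma chainQ_maxBand
    (H : ∀ q q' : Tok, TokDom m n q → TokDom m n q' →
      (MaxIncSeg m n (tpos n q) (tpos n q') [q, q'] ↔ Step2 q q'))
    {Q : List Tok} (hQ : ChainQ m n il ir jl jr Q) :
    MaxBandIncSeg m n (tpos n (.r il jl)) (tpos n (.r ir jr))
      (tval m (.r il jl)) (tval m (.r ir jr)) Q := by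
  obtain ⟨hh, hl, hc, hdom⟩ := hQ
  have hstep : Q.Chain' (fun t t' => MaxIncSeg m n (tpos n t) (tpos n t') [t, t']) :=
    (chain'_and_mem hc hdom).imp (fun a b h => (H _ _ h.2.1 h.2.2).mpr h.1)
  have hlt : Q.Chain' (fun t t' => tpos n t < tpos n t' ∧ tval m t < tval m t') :=
    hstep.imp (fun a b h => maxinc_pair_lt h)
  have hposhead := chain'_head_le (f := tpos n) (fun a b h => le_of_lt h.1) hlt hh
  have hposlast := chain'_le_last (f := tpos n) (fun a b h => le_of_lt h.1) hlt hl
  have hvalhead := chain'_head_le (f := tval m) (fun a b h => le_of_lt h.2) hlt hh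
  have hvallast := chain'_le_last (f := tval m) (fun a b h => le_of_lt h.2) hlt hl
  have hinc : IncSeg m n (tpos n (.r il jl)) (tpos n (.r ir jr)) Q :=
    ⟨fun t ht => ⟨hdom t ht, hposhead t ht, hposlast t ht⟩, hlt⟩
  refine ⟨hinc, fun t ht => ⟨hvalhead t ht, hvallast t ht⟩, ?_⟩
  intro Q' hQ'inc hQ'band hsub
  by_contra hne
  obtain ⟨l₁, x, l₂, he, hsub2⟩ := sublist_ne_exists hsub hne
  haveI : IsTrans Tok (fun t t' => tpos n t < tpos n t' ∧ tval m t < tval m t') :=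
    ⟨fun a b c h1 h2 => ⟨lt_trans h1.1 h2.1, lt_trans h1.2 h2.2⟩⟩
  have hpw : Q'.Pairwise (fun t t' => tpos n t < tpos n t' ∧ tval m t < tval m t') :=
    List.isChain_iff_pairwise.mp hQ'inc.2
  rw [he] at hpw
  obtain ⟨hpw1, hpw2, hcross⟩ := List.pairwise_append.mp hpw
  have hxmem : x ∈ Q' := by rw [he]; exact List.mem_append_right _ (List.mem_cons_self)
  obtain ⟨hxdom, hxpl, hxpr⟩ := hQ'inc.1 x hxmem
  obtain ⟨A, B, hAB, hA, hB⟩ := List.sublist_append_iff.mp hsub2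
  have hQne : Q ≠ [] := by rintro rfl; simp at hh
  by_cases hA0 : A = []
  · -- the inserted element would come before the head of Q
    subst hA0
    simp only [List.nil_append] at hAB
    have htok : (Tok.r il jl) ∈ Q := List.mem_of_mem_head? (by rw [hh]; rfl)
    have hin : (Tok.r il jl) ∈ l₂ := hB.subset (hAB ▸ htok)
    have := (List.rel_of_pairwise_cons hpw2 hin).1
    omega
  by_cases hB0 : B = []
  · -- the inserted element would come after the last of Q
    subst hB0
    simp only [List.append_nil] at hAB
    have h1 := List.getLast?_eq_getLast hQne
    have h2 : Q.getLast hQne = Tok.r ir jr := Option.some_injective _ (h1.symm.trans hl)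
    have htok : (Tok.r ir jr) ∈ Q := h2 ▸ List.getLast_mem hQne
    have hin : (Tok.r ir jr) ∈ l₁ := hA.subset (hAB ▸ htok)
    have := (hcross _ hin x (List.mem_cons_self)).1
    omega
  · -- the inserted element lies between two consecutive elements of Q
    have hqA : A.getLast? = some (A.getLast hA0) := List.getLast?_eq_getLast _
    have hq'B : B.head? = some (B.head hB0) := List.head?_eq_head _
    set q := A.getLast hA0 with hqdef
    set q' := B.head hB0 with hq'def
    have hc' : List.Chain' Step2 (A ++ B) := hAB ▸ hc
    obtain ⟨_, _, hcr⟩ := List.isChain_append.mp hc'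
    have hstepqq' : Step2 q q' := hcr q hqA q' hq'B
    have hqQ : q ∈ Q := hAB ▸ List.mem_append_left _ (List.getLast_mem hA0)
    have hq'Q : q' ∈ Q := hAB ▸ List.mem_append_right _ (List.head_mem hB0)
    have hql₁ : q ∈ l₁ := hA.subset (List.getLast_mem hA0)
    have hq'l₂ : q' ∈ l₂ := hB.subset (List.head_mem hB0)
    have hRqx := hcross q hql₁ x (List.mem_cons_self)
    have hRxq' := List.rel_of_pairwise_cons hpw2 hq'l₂
    have hMax : MaxIncSeg m n (tpos n q) (tpos n q') [q, q'] :=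
      (H q q' (hdom q hqQ) (hdom q' hq'Q)).mpr hstepqq'
    have hincseg : IncSeg m n (tpos n q) (tpos n q') [q, x, q'] := by
      constructor
      · intro t ht
        rcases List.mem_cons.mp ht with rfl | ht
        · exact ⟨hdom _ hqQ, le_refl _, le_of_lt (lt_trans hRqx.1 hRxq'.1)⟩
        rcases List.mem_cons.mp ht with rfl | ht
        · exact ⟨hxdom, le_of_lt hRqx.1, le_of_lt hRxq'.1⟩
        rcases List.mem_cons.mp ht with rfl | ht
        · exact ⟨hdom _ hq'Q, le_of_lt (lt_trans hRqx.1 hRxq'.1), le_refl _⟩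
        · simp at ht
      · exact List.isChain_cons_cons.mpr ⟨hRqx, List.isChain_cons_cons.mpr ⟨hRxq', List.isChain_singleton _⟩⟩
    have hsub3 : [q, q'].Sublist [q, x, q'] :=
      (List.sublist_cons_self x [q']).cons₂ q
    have heq := hMax.2 _ hincseg hsub3
    exact absurd (congrArg List.length heq) (by simp)
end Main
section Main2
variable {m n il ir jl jr : ℕ}

/-- A maximal banded increasing subsequence is a canonical chain. -/
lemma maxBand_chainQ
    (hil : 1 ≤ il) (hii : il ≤ ir) (him : ir ≤ m)
    (hjl : 1 ≤ jl) (hjj : jl ≤ jr) (hjn : jr ≤ n)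
    (H : ∀ q q' : Tok, TokDom m n q → TokDom m n q' →
      (MaxIncSeg m n (tpos n q) (tpos n q') [q, q'] ↔ Step2 q q'))
    {Q : List Tok}
    (hQ : MaxBandIncSeg m n (tpos n (.r il jl)) (tpos n (.r ir jr))
      (tval m (.r il jl)) (tval m (.r ir jr)) Q) :
    ChainQ m n il ir jl jr Q := by
  obtain ⟨hinc, hband, hmax⟩ := hQ
  have hm1 : 1 ≤ m := le_trans hil (le_trans hii him)
  have hn1 : 1 ≤ n := le_trans hjl (le_trans hjj hjn)
  have hdoml : TokDom m n (.r il jl) := ⟨hil, le_trans hii him, hjl, le_trans hjj hjn⟩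
  have hdomr : TokDom m n (.r ir jr) := ⟨le_trans hil hii, him, le_trans hjl hjj, hjn⟩
  have hple : tpos n (.r il jl) ≤ tpos n (.r ir jr) := by
    show (il - 1) * (2 * n - 1) + jl ≤ (ir - 1) * (2 * n - 1) + jr
    exact enc_mono hii hjj
  have hvle : tval m (.r il jl) ≤ tval m (.r ir jr) := by
    show (jl - 1) * (2 * m - 1) + il ≤ (jr - 1) * (2 * m - 1) + ir
    exact enc_mono hjj hii
  -- Q is nonempty
  have hQne : Q ≠ [] := by
    rintro rfl
    have h1 := hmax [.r il jl]
      ⟨fun t ht => by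
          simp only [List.mem_singleton] at ht; subst ht
          exact ⟨hdoml, le_refl _, hple⟩,
        List.isChain_singleton _⟩
      (fun t ht => by
        simp only [List.mem_singleton] at ht; subst ht
        exact ⟨le_refl _, hvle⟩)
      (List.nil_sublist _)
    simp at h1
  -- head of Q
  have hhead : Q.head? = some (.r il jl) := by
    obtain ⟨q1, rest, rfl⟩ := List.exists_cons_of_ne_nil hQne
    obtain ⟨hq1dom, hq1pl, hq1pr⟩ := hinc.1 q1 (List.mem_cons_self)
    obtain ⟨hq1a, hq1b⟩ := hband q1 (List.mem_cons_self)
    by_cases heq : q1 = .r il jl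
    · rw [heq]; rfl
    · exfalso
      have hposne : tpos n q1 ≠ tpos n (.r il jl) := fun h =>
        heq (tok_pos_eq hn1 hq1dom hil hjl (le_trans hjj hjn) h)
      have hvalne : tval m q1 ≠ tval m (.r il jl) := fun h =>
        heq (tok_val_eq hm1 hq1dom hil (le_trans hii him) hjl h)
      have hinc' : IncSeg m n (tpos n (.r il jl)) (tpos n (.r ir jr))
          (.r il jl :: q1 :: rest) := by
        constructor
        · intro t ht
          rcases List.mem_cons.mp ht with rfl | ht
          · exact ⟨hdoml, le_refl _, hple⟩
          · exact hinc.1 t ht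
        · refine List.isChain_cons.mpr ⟨?_, hinc.2⟩
          intro y hy
          simp only [List.head?_cons, Option.mem_def, Option.some.injEq] at hy
          subst hy
          exact ⟨by omega, by omega⟩
      have hband' : Banded m (tval m (.r il jl)) (tval m (.r ir jr))
          (.r il jl :: q1 :: rest) := by
        intro t ht
        rcases List.mem_cons.mp ht with rfl | ht
        · exact ⟨le_refl _, hvle⟩
        · exact hband t ht
      have h1 := hmax _ hinc' hband' (List.sublist_cons_self _ _)
      exact absurd (congrArg List.length h1) (by simp)
  -- last of Q
  have hlast : Q.getLast? = some (.r ir jr) := by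
    have hqk? : Q.getLast? = some (Q.getLast hQne) := List.getLast?_eq_getLast _
    set qk := Q.getLast hQne with hqkdef
    have hqkQ : qk ∈ Q := List.getLast_mem hQne
    obtain ⟨hqkdom, hqkpl, hqkpr⟩ := hinc.1 qk hqkQ
    obtain ⟨hqka, hqkb⟩ := hband qk hqkQ
    by_cases heq : qk = .r ir jr
    · rw [hqk?, heq]
    · exfalso
      have hposne : tpos n qk ≠ tpos n (.r ir jr) := fun h =>
        heq (tok_pos_eq hn1 hqkdom (le_trans hil hii) (le_trans hjl hjj) hjn h)
      have hvalne : tval m qk ≠ tval m (.r ir jr) := fun h =>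
        heq (tok_val_eq hm1 hqkdom (le_trans hil hii) him (le_trans hjl hjj) h)
      have hinc' : IncSeg m n (tpos n (.r il jl)) (tpos n (.r ir jr))
          (Q ++ [.r ir jr]) := by
        constructor
        · intro t ht
          rcases List.mem_append.mp ht with ht | ht
          · exact hinc.1 t ht
          · simp only [List.mem_singleton] at ht; subst ht
            exact ⟨hdomr, hple, le_refl _⟩
        · refine List.isChain_append.mpr ⟨hinc.2, List.isChain_singleton _, ?_⟩
          intro u hu v hv
          simp only [Option.mem_def] at hu hv
          rw [hqk?] at hu
          simp only [Option.some.injEq] at hu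
          simp only [List.head?_cons, Option.some.injEq] at hv
          subst hu; subst hv
          exact ⟨by omega, by omega⟩
      have hband' : Banded m (tval m (.r il jl)) (tval m (.r ir jr)) (Q ++ [.r ir jr]) := by
        intro t ht
        rcases List.mem_append.mp ht with ht | ht
        · exact hband t ht
        · simp only [List.mem_singleton] at ht; subst ht
          exact ⟨hvle, le_refl _⟩
      have h1 := hmax _ hinc' hband' (List.sublist_append_left _ _)
      exact absurd (congrArg List.length h1) (by simp)
  -- the chain property
  refine ⟨hhead, hlast, ?_, fun t ht => (hinc.1 t ht).1⟩
  rw [List.Chain', List.isChain_iff_getElem]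
  intro i hlen
  have hi1 : i < Q.length := by omega
  have hi2 : i + 1 < Q.length := by omega
  set q := Q[i] with hqdef
  set q' := Q[i + 1] with hq'def
  have hqQ : q ∈ Q := List.getElem_mem hi1
  have hq'Q : q' ∈ Q := List.getElem_mem hi2
  obtain ⟨hqdom, hqpl, hqpr⟩ := hinc.1 q hqQ
  obtain ⟨hq'dom, hq'pl, hq'pr⟩ := hinc.1 q' hq'Q
  have hRqq' := List.isChain_iff_getElem.mp hinc.2 i hlen
  rw [← hqdef, ← hq'def] at hRqq'
  rw [← (H q q' hqdom hq'dom)]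
  constructor
  · -- [q, q'] is an increasing subsequence of the segment
    constructor
    · intro t ht
      rcases List.mem_cons.mp ht with rfl | ht
      · exact ⟨hqdom, le_refl _, le_of_lt hRqq'.1⟩
      rcases List.mem_cons.mp ht with rfl | ht
      · exact ⟨hq'dom, le_of_lt hRqq'.1, le_refl _⟩
      · simp at ht
    · exact List.isChain_cons_cons.mpr ⟨hRqq', List.isChain_singleton _⟩
  · -- maximality of [q, q'] in the segment
    intro Q'' hQ''inc hsub
    by_contra hne2
    obtain ⟨l₁, x, l₂, he, hsub2⟩ := sublist_ne_exists hsub hne2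
    haveI : IsTrans Tok (fun t t' => tpos n t < tpos n t' ∧ tval m t < tval m t') :=
      ⟨fun a b c h1 h2 => ⟨lt_trans h1.1 h2.1, lt_trans h1.2 h2.2⟩⟩
    have hpw : Q''.Pairwise (fun t t' => tpos n t < tpos n t' ∧ tval m t < tval m t') :=
      List.isChain_iff_pairwise.mp hQ''inc.2
    rw [he] at hpw
    obtain ⟨hpw1, hpw2, hcross⟩ := List.pairwise_append.mp hpw
    have hxmem : x ∈ Q'' := by rw [he]; exact List.mem_append_right _ (List.mem_cons_self)
    obtain ⟨hxdom, hxq, hxq'⟩ := hQ''inc.1 x hxmem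
    obtain ⟨A, B, hAB, hA, hB⟩ := List.sublist_append_iff.mp hsub2
    rcases A with _ | ⟨a1, A'⟩
    · -- q would be after x
      simp only [List.nil_append] at hAB
      have hq_l₂ : q ∈ l₂ := hB.subset (by rw [← hAB]; exact List.mem_cons_self)
      have := (List.rel_of_pairwise_cons hpw2 hq_l₂).1
      omega
    rcases A' with _ | ⟨a2, A''⟩
    · -- A = [a1] : the generic middle case
      have ha1 : a1 = q := by
        have := congrArg (fun l => l.head?) hAB
        simpa using this.symm
      have hBeq : B = [q'] := by
        have := congrArg List.tail hAB
        simpa using this.symm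
      subst ha1
      have hq_l₁ : q ∈ l₁ := hA.subset (List.mem_cons_self)
      have hq'_l₂ : q' ∈ l₂ := hB.subset (by rw [hBeq]; exact List.mem_cons_self)
      have hRqx := hcross q hq_l₁ x (List.mem_cons_self)
      have hRxq' := List.rel_of_pairwise_cons hpw2 hq'_l₂
      -- insert x into Q between positions i and i+1
      have hgetElem : Q[i]'hi1 = q := rfl
      have htake : Q.take (i + 1) = Q.take i ++ [q] := by
        rw [List.take_succ, List.getElem?_eq_getElem hi1]
        rfl
      have hdrophead : (Q.drop (i + 1)).head? = some q' := by
        rw [List.head?_drop, List.getElem?_eq_getElem hi2]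
      have hinc' : IncSeg m n (tpos n (.r il jl)) (tpos n (.r ir jr))
          (Q.take (i + 1) ++ x :: Q.drop (i + 1)) := by
        constructor
        · intro t ht
          rcases List.mem_append.mp ht with ht | ht
          · exact hinc.1 t ((Q.take_sublist (i + 1)).subset ht)
          rcases List.mem_cons.mp ht with rfl | ht
          · exact ⟨hxdom, le_trans hqpl (le_of_lt hRqx.1), le_trans (le_of_lt hRxq'.1) hq'pr⟩
          · exact hinc.1 t ((Q.drop_sublist (i + 1)).subset ht)
        · refine List.isChain_append.mpr ⟨hinc.2.take _, ?_, ?_⟩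
          · refine List.isChain_cons.mpr ⟨?_, hinc.2.drop _⟩
            intro y hy
            rw [hdrophead] at hy
            simp only [Option.mem_def, Option.some.injEq] at hy
            subst hy
            exact hRxq'
          · intro u hu v hv
            simp only [Option.mem_def] at hu hv
            rw [htake, List.getLast?_concat] at hu
            simp only [Option.some.injEq] at hu
            simp only [List.head?_cons, Option.some.injEq] at hv
            subst hu; subst hv
            exact hRqx
      have hband' : Banded m (tval m (.r il jl)) (tval m (.r ir jr))
          (Q.take (i + 1) ++ x :: Q.drop (i + 1)) := by
        intro t ht
        rcases List.mem_append.mp ht with ht | ht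
        · exact hband t ((Q.take_sublist (i + 1)).subset ht)
        rcases List.mem_cons.mp ht with rfl | ht
        · exact ⟨le_trans (hband q hqQ).1 (le_of_lt hRqx.2),
            le_trans (le_of_lt hRxq'.2) (hband q' hq'Q).2⟩
        · exact hband t ((Q.drop_sublist (i + 1)).subset ht)
      have hsub' : Q.Sublist (Q.take (i + 1) ++ x :: Q.drop (i + 1)) := by
        conv_lhs => rw [← List.take_append_drop (i + 1) Q]
        exact (List.sublist_cons_self x _).append_left _
      have h1 := hmax _ hinc' hband' hsub'
      have h2 := congrArg List.length h1
      simp only [List.length_append, List.length_cons, List.length_take, List.length_drop] at h2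
      omega
    · -- q' would be before x
      have hA'' : a1 = q ∧ a2 = q' ∧ A'' = [] ∧ B = [] := by
        have h3 : a1 :: a2 :: (A'' ++ B) = [q, q'] := by rw [hAB]; rfl
        simp only [List.cons.injEq] at h3
        obtain ⟨rfl, rfl, h4⟩ := h3
        exact ⟨rfl, rfl, by
          rcases List.append_eq_nil_iff.mp h4 with ⟨h5, h6⟩
          exact h5, by
          rcases List.append_eq_nil_iff.mp h4 with ⟨h5, h6⟩
          exact h6⟩
      obtain ⟨rfl, rfl, rfl, rfl⟩ := hA''
      have hq'_l₁ : q' ∈ l₁ := hA.subset (by simp)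
      have := (hcross q' hq'_l₁ x (List.mem_cons_self)).1
      omega
end Main2
theorem banded_maximal_iff_hat_of_alignment (m n : ℕ) (il ir jl jr : ℕ)
    (hil : 1 ≤ il) (hii : il ≤ ir) (him : ir ≤ m)
    (hjl : 1 ≤ jl) (hjj : jl ≤ jr) (hjn : jr ≤ n)
    (H : ∀ q q' : Tok, TokDom m n q → TokDom m n q' →
      (MaxIncSeg m n (tpos n q) (tpos n q') [q, q'] ↔
        ((⌈iq q⌉ : ℚ) ≤ iq q' ∧ (⌈jq q⌉ : ℚ) ≤ jq q' ∧
          (iq q' - iq q) + (jq q' - jq q) = 1))) :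
    ∀ Q : List Tok,
      MaxBandIncSeg m n (tpos n (.r il jl)) (tpos n (.r ir jr))
          (tval m (.r il jl)) (tval m (.r ir jr)) Q ↔
        ∃ P, IsAlignment il ir jl jr P ∧ Q = hat P := by
  intro Q
  have H' : ∀ q q' : Tok, TokDom m n q → TokDom m n q' →
      (MaxIncSeg m n (tpos n q) (tpos n q') [q, q'] ↔ Step2 q q') := H
  constructor
  · intro hQ
    obtain ⟨hh, hl, hc, hdom⟩ := maxBand_chainQ hil hii him hjl hjj hjn H' hQ
    have hlastr : ∀ el, Q.getLast? = some el → ∃ a b, el = Tok.r a b := by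
      intro el hel
      rw [hl] at hel
      exact ⟨ir, jr, (Option.some.injEq _ _).mp hel.symm⟩
    obtain ⟨ih1, ih2, ih3, ih4⟩ := unhat_spec Q.length Q (le_refl _) hc il jl hh hlastr
    exact ⟨unhat Q, ⟨ih2, ih3 ir jr hl, ih4⟩, ih1.symm⟩
  · rintro ⟨P, hP, rfl⟩
    exact chainQ_maxBand H' (alignment_chainQ hil him hjl hjn hP)
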